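/- For any concave function φ : ℝ≥0 → ℝ and any p ∈ [0,1]^m, E[φ(∑_{i=1}^m Ber(p_i))] ≥ E[φ(Poi(∑_{i=1}^m p_i))], where the Bernoulli random variables Ber(p_i) are independent. -/

import Mathlib

set_option maxHeartbeats 1000000

open Finset


lemma expHasSum (x : ℝ) : HasSum (fun k : ℕ => x ^ k / (Nat.factorial k)) (Real.exp x) := by
  rw [Real.exp_eq_exp_ℝ]
  exact NormedSpace.expSeries_div_hasSum_exp x

lemma meanHasSum (x : ℝ) :
    HasSum (fun k : ℕ => (k : ℝ) * (x ^ k / (Nat.factorial k))) (x * Real.exp x) := by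
  set f : ℕ → ℝ := fun k => (k : ℝ) * (x ^ k / (Nat.factorial k)) with hf
  have h : HasSum (fun k : ℕ => f (k + 1))
      (x * Real.exp x - ∑ i ∈ range 1, f i) := by
    have h2 := (expHasSum x).mul_left x
    simp only [hf, range_one, sum_singleton, Nat.cast_zero, zero_mul, sub_zero]
    convert h2 using 2 with k
    case e'_3 => rfl
    push_cast [Nat.factorial_succ]
    field_simp
    ring
  exact (hasSum_nat_add_iff' 1).mp h

lemma chord {φ : ℝ → ℝ} (hconc : ConcaveOn ℝ (Set.Ici 0) φ) {x : ℝ} (hx : 0 ≤ x) (i : ℕ) :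
    φ (x + i) ≤ φ x + i * (φ (x + 1) - φ x) := by
  rcases Nat.eq_zero_or_pos i with hi | hi
  · simp [hi]
  · have hi' : (1 : ℝ) ≤ i := by exact_mod_cast hi
    have hipos : (0 : ℝ) < i := by linarith
    have h := hconc.2 (show x ∈ Set.Ici (0:ℝ) from hx)
      (show x + i ∈ Set.Ici (0:ℝ) by simp only [Set.mem_Ici]; positivity)
      (show (0:ℝ) ≤ 1 - 1/i by rw [sub_nonneg, div_le_one hipos]; exact hi')
      (show (0:ℝ) ≤ 1/i by positivity)
      (by ring)
    simp only [smul_eq_mul] at h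
    have hxy : (1 - 1/(i:ℝ)) * x + 1/i * (x + i) = x + 1 := by field_simp; ring
    rw [hxy] at h
    have h2 := mul_le_mul_of_nonneg_left h hipos.le
    have hne : (i:ℝ) ≠ 0 := hipos.ne'
    field_simp at h2
    nlinarith


lemma transfer1 {μ ν : ℝ} (hμ : 0 ≤ μ) (hμν : μ ≤ ν) {c : ℕ → ℝ} (hc : ∀ k, 0 ≤ c k)
    (h : Summable fun k : ℕ => ν ^ k / (Nat.factorial k) * c k) :
    Summable fun k : ℕ => μ ^ k / (Nat.factorial k) * c k := by
  refine h.of_nonneg_of_le (fun k => mul_nonneg (by positivity) (hc k)) (fun k => ?_)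
  have hfact : (0:ℝ) < (Nat.factorial k : ℝ) := by positivity
  exact mul_le_mul_of_nonneg_right ((div_le_div_iff_of_pos_right hfact).mpr (pow_le_pow_left₀ hμ hμν k)) (hc k)

lemma transfer2 {μ ν : ℝ} (hμ : 0 ≤ μ) (hμν : μ < ν) {c : ℕ → ℝ} (hc : ∀ k, 0 ≤ c k)
    (h : Summable fun k : ℕ => ν ^ k / (Nat.factorial k) * c k) :
    Summable fun k : ℕ => μ ^ k / (Nat.factorial k) * c (k + 1) := by
  have hν : 0 < ν := lt_of_le_of_lt hμ hμν
  set r : ℝ := μ / ν with hr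
  have hr0 : 0 ≤ r := by positivity
  have hr1 : r < 1 := (div_lt_one hν).mpr hμν
  have ht : Summable (fun k : ℕ => ((k : ℝ) + 1) * r ^ k) := by
    have h1 : Summable (fun k : ℕ => (k : ℝ) ^ 1 * r ^ k) :=
      summable_pow_mul_geometric_of_norm_lt_one 1 (by rwa [Real.norm_eq_abs, abs_of_nonneg hr0])
    have h2 : Summable (fun k : ℕ => r ^ k) := summable_geometric_of_lt_one hr0 hr1
    simpa [add_mul, pow_one] using h1.add h2
  set M : ℝ := ∑' k : ℕ, ((k : ℝ) + 1) * r ^ k with hM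
  have hMle : ∀ k : ℕ, ((k : ℝ) + 1) * r ^ k ≤ M :=
    fun k => ht.le_tsum k (fun j _ => by positivity)
  have hshift : Summable (fun k : ℕ => M / ν * (ν ^ (k+1) / (Nat.factorial (k+1)) * c (k+1))) :=
    (((summable_nat_add_iff 1).mpr h)).mul_left _
  refine hshift.of_nonneg_of_le (fun k => mul_nonneg (by positivity) (hc _)) (fun k => ?_)
  have hμr : μ = r * ν := by rw [hr, div_mul_cancel₀ μ hν.ne']
  have key : μ ^ k / (Nat.factorial k) * c (k + 1) =
      (((k:ℝ) + 1) * r ^ k / ν) * (ν ^ (k+1) / (Nat.factorial (k+1)) * c (k+1)) := by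
    rw [hμr, mul_pow, Nat.factorial_succ]
    push_cast
    field_simp
    ring
  rw [key]
  have hnn : (0:ℝ) ≤ ν ^ (k+1) / (Nat.factorial (k+1)) * c (k+1) := mul_nonneg (by positivity) (hc _)
  apply mul_le_mul_of_nonneg_right _ hnn
  gcongr
  exact hMle k


lemma binomId (μ p : ℝ) (n : ℕ) :
    ∑ kl ∈ Finset.HasAntidiagonal.antidiagonal n,
      μ ^ kl.1 / (Nat.factorial kl.1) * (p ^ kl.2 / (Nat.factorial kl.2)) =
      (μ + p) ^ n / (Nat.factorial n) := by
  rw [Finset.Nat.sum_antidiagonal_eq_sum_range_succ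
      (fun j i => μ ^ j / (Nat.factorial j) * (p ^ i / (Nat.factorial i)))]
  rw [add_pow, Finset.sum_div]
  refine Finset.sum_congr rfl (fun j hj => ?_)
  have hjn : j ≤ n := Nat.lt_succ_iff.mp (Finset.mem_range.mp hj)
  have hch : ((n.choose j : ℕ) : ℝ) * ((Nat.factorial j : ℕ) : ℝ) *
      ((Nat.factorial (n - j) : ℕ) : ℝ) = ((Nat.factorial n : ℕ) : ℝ) := by
    exact_mod_cast congrArg (Nat.cast (R := ℝ)) (Nat.choose_mul_factorial_mul_factorial hjn)
  have h1 : (0:ℝ) < (Nat.factorial j : ℝ) := by positivity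
  have h2 : (0:ℝ) < (Nat.factorial (n-j) : ℝ) := by positivity
  have h3 : (0:ℝ) < (Nat.factorial n : ℝ) := by positivity
  field_simp
  linear_combination (- μ ^ j * p ^ (n - j)) * hch

lemma regroup {μ p : ℝ} (hμ : 0 ≤ μ) (hp : 0 ≤ p) (c : ℕ → ℝ)
    (hs : Summable fun k : ℕ => (μ + p) ^ k / (Nat.factorial k) * |c k|) :
    Summable (fun z : ℕ × ℕ =>
        μ ^ z.1 / (Nat.factorial z.1) * (p ^ z.2 / (Nat.factorial z.2)) * c (z.1 + z.2)) ∧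
    ∑' k : ℕ, (μ + p) ^ k / (Nat.factorial k) * c k =
      ∑' z : ℕ × ℕ,
        μ ^ z.1 / (Nat.factorial z.1) * (p ^ z.2 / (Nat.factorial z.2)) * c (z.1 + z.2) := by
  set F : ℕ × ℕ → ℝ := fun z =>
    μ ^ z.1 / (Nat.factorial z.1) * (p ^ z.2 / (Nat.factorial z.2)) * c (z.1 + z.2) with hF
  have key : ∀ (d : ℕ → ℝ) (n : ℕ),
      ∑ x ∈ Finset.HasAntidiagonal.antidiagonal n,
        μ ^ x.1 / (Nat.factorial x.1) * (p ^ x.2 / (Nat.factorial x.2)) * d (x.1 + x.2) =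
      (μ + p) ^ n / (Nat.factorial n) * d n := by
    intro d n
    rw [show (∑ x ∈ Finset.HasAntidiagonal.antidiagonal n,
        μ ^ x.1 / (Nat.factorial x.1) * (p ^ x.2 / (Nat.factorial x.2)) * d (x.1 + x.2)) =
        ∑ x ∈ Finset.HasAntidiagonal.antidiagonal n,
        μ ^ x.1 / (Nat.factorial x.1) * (p ^ x.2 / (Nat.factorial x.2)) * d n from
      Finset.sum_congr rfl (fun x hx => by
        rw [Finset.HasAntidiagonal.mem_antidiagonal.mp hx])]
    rw [← Finset.sum_mul, binomId]
  have hFabs : ∀ z : ℕ × ℕ, |F z| =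
      μ ^ z.1 / (Nat.factorial z.1) * (p ^ z.2 / (Nat.factorial z.2)) * |c (z.1 + z.2)| := by
    intro z
    rw [hF, abs_mul, abs_of_nonneg (by positivity :
      (0:ℝ) ≤ μ ^ z.1 / (Nat.factorial z.1) * (p ^ z.2 / (Nat.factorial z.2)))]
  set e := Finset.HasAntidiagonal.sigmaAntidiagonalEquivProd (A := ℕ) with he
  have hfiber : ∀ n : ℕ, Summable fun y : (Finset.HasAntidiagonal.antidiagonal n : Finset (ℕ × ℕ)) =>
      F (e ⟨n, y⟩) := fun n => (hasSum_fintype _).summable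
  have habs : Summable fun σ : Σ n : ℕ, (Finset.HasAntidiagonal.antidiagonal n : Finset (ℕ × ℕ)) => |F (e σ)| := by
    apply (summable_sigma_of_nonneg (fun σ => abs_nonneg _)).mpr
    constructor
    · exact fun n => (hasSum_fintype _).summable
    · have : ∀ n : ℕ, (∑' y : (Finset.HasAntidiagonal.antidiagonal n : Finset (ℕ × ℕ)), |F (e ⟨n, y⟩)|) =
          (μ + p) ^ n / (Nat.factorial n) * |c n| := by
        intro n
        have h1 : (∑' y : (Finset.HasAntidiagonal.antidiagonal n : Finset (ℕ × ℕ)), |F (e ⟨n, y⟩)|) =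
            ∑ x ∈ Finset.HasAntidiagonal.antidiagonal n, |F x| := by
          rw [← Finset.tsum_subtype]
          rfl
        rw [h1]
        simp_rw [hFabs]
        exact key (fun k => |c k|) n
      simpa only [this] using hs
  have hFe : Summable fun σ : Σ n : ℕ, (Finset.HasAntidiagonal.antidiagonal n : Finset (ℕ × ℕ)) => F (e σ) :=
    habs.of_abs
  have hFsummable : Summable F := e.summable_iff.mp hFe
  refine ⟨hFsummable, ?_⟩
  have h2 : ∑' z : ℕ × ℕ, F z = ∑' σ : Σ n : ℕ, (Finset.HasAntidiagonal.antidiagonal n : Finset (ℕ × ℕ)),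
      F (e σ) := (e.tsum_eq F).symm
  have h3 : (∑' σ : Σ n : ℕ, (Finset.HasAntidiagonal.antidiagonal n : Finset (ℕ × ℕ)), F (e σ)) =
      ∑' n : ℕ, ∑' y : (Finset.HasAntidiagonal.antidiagonal n : Finset (ℕ × ℕ)), F (e ⟨n, y⟩) :=
    Summable.tsum_sigma' (fun n => hfiber n) hFe
  have h4 : ∀ n : ℕ, (∑' y : (Finset.HasAntidiagonal.antidiagonal n : Finset (ℕ × ℕ)), F (e ⟨n, y⟩)) =
      (μ + p) ^ n / (Nat.factorial n) * c n := by
    intro n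
    have h1 : (∑' y : (Finset.HasAntidiagonal.antidiagonal n : Finset (ℕ × ℕ)), F (e ⟨n, y⟩)) =
        ∑ x ∈ Finset.HasAntidiagonal.antidiagonal n, F x := by
      rw [← Finset.tsum_subtype]
      rfl
    rw [h1]
    exact key c n
  rw [h2, h3]
  exact (tsum_congr h4).symm

lemma absfac {x : ℝ} (hx : 0 ≤ x) (d : ℕ → ℝ) :
    (fun j : ℕ => |x ^ j / (Nat.factorial j) * d j|) =
      fun j : ℕ => x ^ j / (Nat.factorial j) * |d j| :=
  funext fun j => by rw [abs_mul, abs_of_nonneg (by positivity : (0:ℝ) ≤ x ^ j / (Nat.factorial j))]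

lemma stepB {μ q : ℝ} (hμ : 0 ≤ μ) (hq0 : 0 < q) (hq1 : q ≤ 1) (b : ℕ) {φ : ℝ → ℝ}
    (hconc : ConcaveOn ℝ (Set.Ici 0) φ)
    (hs : Summable fun k : ℕ => (μ + q) ^ k / (Nat.factorial k) * |φ ((b + k : ℕ) : ℝ)|) :
    ∑' k : ℕ, Real.exp (-(μ + q)) * (μ + q) ^ k / (Nat.factorial k) * φ ((b + k : ℕ) : ℝ) ≤
      (1 - q) * ∑' k : ℕ, Real.exp (-μ) * μ ^ k / (Nat.factorial k) * φ ((b + k : ℕ) : ℝ) +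
      q * ∑' k : ℕ, Real.exp (-μ) * μ ^ k / (Nat.factorial k) * φ ((b + 1 + k : ℕ) : ℝ) := by
  set c : ℕ → ℝ := fun k => φ ((b + k : ℕ) : ℝ) with hc
  set c' : ℕ → ℝ := fun k => φ ((b + 1 + k : ℕ) : ℝ) with hc'
  have hcc' : ∀ k : ℕ, c (k + 1) = c' k := by
    intro k; rw [hc, hc']; congr 1; push_cast; ring
  obtain ⟨hFs, hEq⟩ := regroup hμ hq0.le c hs
  have hTabs : Summable fun j : ℕ => μ ^ j / (Nat.factorial j) * |c j| :=
    transfer1 hμ (by linarith) (fun k => abs_nonneg _) hs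
  have hT'abs : Summable fun j : ℕ => μ ^ j / (Nat.factorial j) * |c' j| := by
    have h := transfer2 hμ (by linarith : μ < μ + q) (fun k => abs_nonneg _) hs
    have h2 : (fun k : ℕ => μ ^ k / (Nat.factorial k) * |c (k + 1)|) =
        fun k : ℕ => μ ^ k / (Nat.factorial k) * |c' k| :=
      funext fun k => by rw [hcc']
    rw [← h2]; exact h
  have hT : Summable fun j : ℕ => μ ^ j / (Nat.factorial j) * c j :=
    Summable.of_abs (by rw [absfac hμ]; exact hTabs)
  have hT' : Summable fun j : ℕ => μ ^ j / (Nat.factorial j) * c' j :=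
    Summable.of_abs (by rw [absfac hμ]; exact hT'abs)
  have hDabs : Summable fun j : ℕ => μ ^ j / (Nat.factorial j) * |c' j - c j| := by
    refine (hT'abs.add hTabs).of_nonneg_of_le (fun j => by positivity) (fun j => ?_)
    have h1 : |c' j - c j| ≤ |c' j| + |c j| := abs_sub _ _
    have h2 : (0:ℝ) ≤ μ ^ j / (Nat.factorial j) := by positivity
    calc μ ^ j / (Nat.factorial j) * |c' j - c j|
        ≤ μ ^ j / (Nat.factorial j) * (|c' j| + |c j|) := mul_le_mul_of_nonneg_left h1 h2
      _ = μ ^ j / (Nat.factorial j) * |c' j| + μ ^ j / (Nat.factorial j) * |c j| := by ring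
  have hD : Summable fun j : ℕ => μ ^ j / (Nat.factorial j) * (c' j - c j) :=
    Summable.of_abs (by rw [absfac hμ]; exact hDabs)
  -- second-factor summabilities
  have hqs : Summable fun i : ℕ => q ^ i / (Nat.factorial i) := (expHasSum q).summable
  have hqm : Summable fun i : ℕ => (i : ℝ) * (q ^ i / (Nat.factorial i)) :=
    (meanHasSum q).summable
  have hqsn : Summable fun i : ℕ => ‖q ^ i / (Nat.factorial i)‖ := by
    have : (fun i : ℕ => ‖q ^ i / (Nat.factorial i)‖) = fun i : ℕ => q ^ i / (Nat.factorial i) :=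
      funext fun i => by rw [Real.norm_eq_abs, abs_of_nonneg (by positivity)]
    rw [this]; exact hqs
  have hqmn : Summable fun i : ℕ => ‖(i : ℝ) * (q ^ i / (Nat.factorial i))‖ := by
    have : (fun i : ℕ => ‖(i : ℝ) * (q ^ i / (Nat.factorial i))‖) =
        fun i : ℕ => (i : ℝ) * (q ^ i / (Nat.factorial i)) :=
      funext fun i => by rw [Real.norm_eq_abs, abs_of_nonneg (by positivity)]
    rw [this]; exact hqm
  have hTn : Summable fun j : ℕ => ‖μ ^ j / (Nat.factorial j) * c j‖ := by
    have : (fun j : ℕ => ‖μ ^ j / (Nat.factorial j) * c j‖) =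
        fun j : ℕ => μ ^ j / (Nat.factorial j) * |c j| := by
      simp only [Real.norm_eq_abs]; exact absfac hμ c
    rw [this]; exact hTabs
  have hDn : Summable fun j : ℕ => ‖μ ^ j / (Nat.factorial j) * (c' j - c j)‖ := by
    have : (fun j : ℕ => ‖μ ^ j / (Nat.factorial j) * (c' j - c j)‖) =
        fun j : ℕ => μ ^ j / (Nat.factorial j) * |c' j - c j| := by
      simp only [Real.norm_eq_abs]; exact absfac hμ _
    rw [this]; exact hDabs
  have hG1 : Summable fun z : ℕ × ℕ =>
      (μ ^ z.1 / (Nat.factorial z.1) * c z.1) * (q ^ z.2 / (Nat.factorial z.2)) :=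
    summable_mul_of_summable_norm hTn hqsn
  have hG2 : Summable fun z : ℕ × ℕ =>
      (μ ^ z.1 / (Nat.factorial z.1) * (c' z.1 - c z.1)) *
        ((z.2 : ℝ) * (q ^ z.2 / (Nat.factorial z.2))) :=
    summable_mul_of_summable_norm hDn hqmn
  have hG : Summable fun z : ℕ × ℕ =>
      (μ ^ z.1 / (Nat.factorial z.1) * c z.1) * (q ^ z.2 / (Nat.factorial z.2)) +
      (μ ^ z.1 / (Nat.factorial z.1) * (c' z.1 - c z.1)) *
        ((z.2 : ℝ) * (q ^ z.2 / (Nat.factorial z.2))) := hG1.add hG2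
  -- pointwise bound
  have hle : ∀ z : ℕ × ℕ,
      μ ^ z.1 / (Nat.factorial z.1) * (q ^ z.2 / (Nat.factorial z.2)) * c (z.1 + z.2) ≤
      (μ ^ z.1 / (Nat.factorial z.1) * c z.1) * (q ^ z.2 / (Nat.factorial z.2)) +
      (μ ^ z.1 / (Nat.factorial z.1) * (c' z.1 - c z.1)) *
        ((z.2 : ℝ) * (q ^ z.2 / (Nat.factorial z.2))) := by
    rintro ⟨j, i⟩
    have hx : (0:ℝ) ≤ ((b + j : ℕ) : ℝ) := by positivity
    have hch := chord hconc hx i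
    have h1 : c (j + i) = φ (((b + j : ℕ) : ℝ) + (i : ℝ)) := by
      rw [hc]; congr 1; push_cast; ring
    have h2 : c' j = φ (((b + j : ℕ) : ℝ) + 1) := by
      rw [hc']; congr 1; push_cast; ring
    have h3 : c j = φ ((b + j : ℕ) : ℝ) := rfl
    have hcj : c (j + i) ≤ c j + (i : ℝ) * (c' j - c j) := by
      rw [h1, h2, h3]; exact hch
    have hnn : (0:ℝ) ≤ μ ^ j / (Nat.factorial j) * (q ^ i / (Nat.factorial i)) := by positivity
    calc μ ^ j / (Nat.factorial j) * (q ^ i / (Nat.factorial i)) * c (j + i)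
        ≤ μ ^ j / (Nat.factorial j) * (q ^ i / (Nat.factorial i)) *
            (c j + (i : ℝ) * (c' j - c j)) := mul_le_mul_of_nonneg_left hcj hnn
      _ = (μ ^ j / (Nat.factorial j) * c j) * (q ^ i / (Nat.factorial i)) +
          (μ ^ j / (Nat.factorial j) * (c' j - c j)) *
            ((i : ℝ) * (q ^ i / (Nat.factorial i))) := by ring
  -- main chain
  set T : ℝ := ∑' j : ℕ, μ ^ j / (Nat.factorial j) * c j with hTdef
  set T' : ℝ := ∑' j : ℕ, μ ^ j / (Nat.factorial j) * c' j with hT'def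
  have hGsum : (∑' z : ℕ × ℕ,
      ((μ ^ z.1 / (Nat.factorial z.1) * c z.1) * (q ^ z.2 / (Nat.factorial z.2)) +
      (μ ^ z.1 / (Nat.factorial z.1) * (c' z.1 - c z.1)) *
        ((z.2 : ℝ) * (q ^ z.2 / (Nat.factorial z.2))))) =
      T * Real.exp q + (T' - T) * (q * Real.exp q) := by
    rw [hG1.tsum_add hG2]
    rw [← tsum_mul_tsum_of_summable_norm hTn hqsn, ← tsum_mul_tsum_of_summable_norm hDn hqmn]
    rw [(expHasSum q).tsum_eq, (meanHasSum q).tsum_eq]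
    congr 1
    congr 1
    · have : (fun j : ℕ => μ ^ j / (Nat.factorial j) * (c' j - c j)) =
          fun j : ℕ => μ ^ j / (Nat.factorial j) * c' j - μ ^ j / (Nat.factorial j) * c j :=
        funext fun j => by ring
      rw [this, hT'.tsum_sub hT]
  have hL : (∑' k : ℕ, Real.exp (-(μ + q)) * (μ + q) ^ k / (Nat.factorial k) * c k) =
      Real.exp (-(μ + q)) * ∑' k : ℕ, (μ + q) ^ k / (Nat.factorial k) * c k := by
    rw [← tsum_mul_left]
    exact tsum_congr fun k => by ring
  have hR1 : (∑' k : ℕ, Real.exp (-μ) * μ ^ k / (Nat.factorial k) * c k) =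
      Real.exp (-μ) * T := by
    rw [hTdef, ← tsum_mul_left]
    exact tsum_congr fun k => by ring
  have hR2 : (∑' k : ℕ, Real.exp (-μ) * μ ^ k / (Nat.factorial k) * c' k) =
      Real.exp (-μ) * T' := by
    rw [hT'def, ← tsum_mul_left]
    exact tsum_congr fun k => by ring
  rw [hL, hR1, hR2, hEq]
  have hbound := hFs.tsum_le_tsum hle hG
  have hexp : Real.exp (-(μ + q)) * Real.exp q = Real.exp (-μ) := by
    rw [← Real.exp_add]; ring_nf
  calc Real.exp (-(μ + q)) * ∑' z : ℕ × ℕ,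
        μ ^ z.1 / (Nat.factorial z.1) * (q ^ z.2 / (Nat.factorial z.2)) * c (z.1 + z.2)
      ≤ Real.exp (-(μ + q)) * (T * Real.exp q + (T' - T) * (q * Real.exp q)) := by
        rw [← hGsum]
        exact mul_le_mul_of_nonneg_left hbound (Real.exp_nonneg _)
    _ = (1 - q) * (Real.exp (-μ) * T) + q * (Real.exp (-μ) * T') := by
        linear_combination (T + q * T' - q * T) * hexp

lemma mainInd {ι : Type*} [DecidableEq ι] (p : ι → ℝ) (φ : ℝ → ℝ)
    (hconc : ConcaveOn ℝ (Set.Ici 0) φ) (u : Finset ι) :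
    (∀ i ∈ u, p i ∈ Set.Icc (0:ℝ) 1) → ∀ b : ℕ,
    (Summable fun k : ℕ =>
      (∑ i ∈ u, p i) ^ k / (Nat.factorial k) * |φ ((b + k : ℕ) : ℝ)|) →
    ∑' k : ℕ, Real.exp (-(∑ i ∈ u, p i)) * (∑ i ∈ u, p i) ^ k / (Nat.factorial k) *
        φ ((b + k : ℕ) : ℝ) ≤
      ∑ s ∈ u.powerset, ((∏ i ∈ s, p i) * ∏ i ∈ u \ s, (1 - p i)) *
        φ ((b + s.card : ℕ) : ℝ) := by
  induction u using Finset.induction_on with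
  | empty =>
    intro _ b _
    simp only [Finset.sum_empty, Finset.powerset_empty, Finset.sum_singleton,
      Finset.prod_empty, Finset.card_empty, one_mul, mul_one, Finset.sdiff_empty,
      add_zero, neg_zero, Real.exp_zero]
    rw [tsum_eq_single 0 (fun k hk => by simp [zero_pow hk])]
    simp
  | @insert a u ha ih =>
    intro hu b hsb
    have hpa0 : 0 ≤ p a := (hu a (Finset.mem_insert_self a u)).1
    have hpa1 : p a ≤ 1 := (hu a (Finset.mem_insert_self a u)).2
    have hu' : ∀ i ∈ u, p i ∈ Set.Icc (0:ℝ) 1 :=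
      fun i hi => hu i (Finset.mem_insert_of_mem hi)
    have hμ0 : 0 ≤ ∑ i ∈ u, p i :=
      Finset.sum_nonneg fun i hi => (hu' i hi).1
    have hins : ∑ i ∈ insert a u, p i = (∑ i ∈ u, p i) + p a := by
      rw [Finset.sum_insert ha, add_comm]
    have hsd : ∀ t : Finset ι, insert a u \ insert a t = u \ t := by
      intro t
      ext x
      simp only [Finset.mem_sdiff, Finset.mem_insert]
      by_cases hxa : x = a
      · subst hxa; simp [ha]
      · simp [hxa]
    have hRHS : (∑ s ∈ (insert a u).powerset,
        ((∏ i ∈ s, p i) * ∏ i ∈ insert a u \ s, (1 - p i)) * φ ((b + s.card : ℕ) : ℝ)) =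
        (1 - p a) * (∑ s ∈ u.powerset,
          ((∏ i ∈ s, p i) * ∏ i ∈ u \ s, (1 - p i)) * φ ((b + s.card : ℕ) : ℝ)) +
        p a * (∑ s ∈ u.powerset,
          ((∏ i ∈ s, p i) * ∏ i ∈ u \ s, (1 - p i)) * φ ((b + 1 + s.card : ℕ) : ℝ)) := by
      rw [Finset.sum_powerset_insert ha]
      congr 1
      · rw [Finset.mul_sum]
        refine Finset.sum_congr rfl (fun t ht => ?_)
        have hat : a ∉ t := fun h => ha (Finset.mem_powerset.mp ht h)
        have hau : a ∉ u \ t := fun h => ha (Finset.mem_sdiff.mp h).1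
        rw [Finset.insert_sdiff_of_notMem u hat, Finset.prod_insert hau]
        ring
      · rw [Finset.mul_sum]
        refine Finset.sum_congr rfl (fun t ht => ?_)
        have hat : a ∉ t := fun h => ha (Finset.mem_powerset.mp ht h)
        rw [Finset.prod_insert hat, hsd t, Finset.card_insert_of_notMem hat,
          show b + (t.card + 1) = b + 1 + t.card from by omega]
        ring
    rw [hins, hRHS]
    by_cases hpa : p a = 0
    · rw [hpa]
      simp only [add_zero, sub_zero, one_mul, zero_mul]
      rw [hins, hpa, add_zero] at hsb
      exact ih hu' b hsb
    · have hq0 : 0 < p a := hpa0.lt_of_ne (Ne.symm hpa)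
      rw [hins] at hsb
      refine le_trans (stepB hμ0 hq0 hpa1 b hconc hsb) ?_
      have ih1 := ih hu' b (transfer1 hμ0 (by linarith) (fun k => abs_nonneg _) hsb)
      have h2 := transfer2 hμ0
        (by linarith : (∑ i ∈ u, p i) < (∑ i ∈ u, p i) + p a) (fun k => abs_nonneg _) hsb
      have h2' : Summable fun k : ℕ =>
          (∑ i ∈ u, p i) ^ k / (Nat.factorial k) * |φ ((b + 1 + k : ℕ) : ℝ)| := by
        have heq : (fun k : ℕ =>
            (∑ i ∈ u, p i) ^ k / (Nat.factorial k) * |φ ((b + (k + 1) : ℕ) : ℝ)|) =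
            fun k : ℕ =>
            (∑ i ∈ u, p i) ^ k / (Nat.factorial k) * |φ ((b + 1 + k : ℕ) : ℝ)| :=
          funext fun k => by rw [show b + (k + 1) = b + 1 + k from by omega]
        rw [← heq]; exact h2
      have ih2 := ih hu' (b + 1) h2'
      exact add_le_add (mul_le_mul_of_nonneg_left ih1 (by linarith))
        (mul_le_mul_of_nonneg_left ih2 hq0.le)


/-- For concave `φ` and independent Bernoulli random variables `Ber(p i)`,
`E[φ(∑ i, Ber (p i))] ≥ E[φ(Poi(∑ i, p i))]`. The left-hand side is written as an
explicit sum over the outcomes of the independent Bernoulli vector. -/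
theorem stmt1 (m : ℕ) (p : Fin m → ℝ) (hp : ∀ i, p i ∈ Set.Icc (0 : ℝ) 1)
    (φ : ℝ → ℝ) (hconc : ConcaveOn ℝ (Set.Ici 0) φ)
    (hsum : Summable fun k : ℕ =>
      Real.exp (-(∑ i, p i)) * (∑ i, p i) ^ k / (Nat.factorial k) * φ k) :
    (∑' k : ℕ, Real.exp (-(∑ i, p i)) * (∑ i, p i) ^ k / (Nat.factorial k) * φ k) ≤
      ∑ s ∈ Finset.univ.powerset,
        ((∏ i ∈ s, p i) * ∏ i ∈ sᶜ, (1 - p i)) * φ s.card := by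
  have hlam0 : 0 ≤ ∑ i, p i := Finset.sum_nonneg fun i _ => (hp i).1
  have h1 : Summable fun k : ℕ =>
      |Real.exp (-(∑ i, p i)) * (∑ i, p i) ^ k / (Nat.factorial k) * φ k| := hsum.abs
  have h2 : (fun k : ℕ =>
      |Real.exp (-(∑ i, p i)) * (∑ i, p i) ^ k / (Nat.factorial k) * φ k|) =
      fun k : ℕ => Real.exp (-(∑ i, p i)) * ((∑ i, p i) ^ k / (Nat.factorial k) * |φ k|) :=
    funext fun k => by
      rw [abs_mul, abs_of_nonneg (show (0:ℝ) ≤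
        Real.exp (-(∑ i, p i)) * (∑ i, p i) ^ k / (Nat.factorial k) by positivity)]
      ring
  rw [h2] at h1
  have h3 : Summable fun k : ℕ => (∑ i, p i) ^ k / (Nat.factorial k) * |φ k| :=
    (summable_mul_left_iff (Real.exp_ne_zero _)).mp h1
  have h4 : Summable fun k : ℕ =>
      (∑ i, p i) ^ k / (Nat.factorial k) * |φ ((0 + k : ℕ) : ℝ)| := by
    simpa using h3
  have h := mainInd p φ hconc Finset.univ (fun i _ => hp i) 0 h4
  simp only [Nat.zero_add, ← Finset.compl_eq_univ_sdiff] at h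
  simpa using h
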